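/- Let G be a group, A a set, and τ : A^G → A^G a cellular automaton with local defining map μ : A^M → A for a finite memory set M ⊆ G. Let H be the subgroup of G generated by M, and let τ_H : A^H → A^H be the cellular automaton over H with the same local defining map μ. Then τ is injective if and only if τ_H is injective. -/

import Mathlib

theorem stmt_7 {G A : Type*} [Group G] (M : Set G) (hMfin : M.Finite)
    (μ : (M → A) → A) (τ : (G → A) → (G → A))
    (hτ : ∀ (c : G → A) (g : G), τ c g = μ (fun m : M => c (g * m)))
    (τH : (↥(Subgroup.closure M) → A) → (↥(Subgroup.closure M) → A))
    (hτH : ∀ (c : ↥(Subgroup.closure M) → A) (h : ↥(Subgroup.closure M)),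
      τH c h = μ (fun m : M => c (h * ⟨m.1, Subgroup.subset_closure m.2⟩))) :
    Function.Injective τ ↔ Function.Injective τH := by
  classical
  have key : ∀ (g : G) (m : M), g * (m : G) ∈ Subgroup.closure M ↔ g ∈ Subgroup.closure M := by
    intro g m
    constructor
    · intro h
      have hg : g = g * (m : G) * (m : G)⁻¹ := by group
      rw [hg]
      exact mul_mem h (inv_mem (Subgroup.subset_closure m.2))
    · intro h
      exact mul_mem h (Subgroup.subset_closure m.2)
  constructor
  · intro hinj c1 c2 heq
    set e : (↥(Subgroup.closure M) → A) → (G → A) :=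
      fun c g => if h : g ∈ Subgroup.closure M then c ⟨g, h⟩ else c1 1 with he
    have h1 : ∀ (c : ↥(Subgroup.closure M) → A) (g : G) (hg : g ∈ Subgroup.closure M),
        μ (fun m : M => e c (g * m)) = τH c ⟨g, hg⟩ := by
      intro c g hg
      rw [hτH]
      congr 1
      funext m
      simp only [he]
      rw [dif_pos ((key g m).mpr hg)]
      rfl
    have hext : τ (e c1) = τ (e c2) := by
      funext g
      rw [hτ, hτ]
      by_cases hg : g ∈ Subgroup.closure M
      · rw [h1 c1 g hg, h1 c2 g hg, heq]
      · have h2 : ∀ c : ↥(Subgroup.closure M) → A,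
            (fun m : M => e c (g * m)) = fun _ : M => c1 1 := by
          intro c
          funext m
          simp only [he]
          rw [dif_neg (fun h => hg ((key g m).mp h))]
        rw [h2, h2]
    have := hinj hext
    funext h
    have hh : e c1 h = e c2 h := congrFun this h
    simpa only [he, dif_pos h.2] using hh
  · intro hinj c1 c2 heq
    funext g
    have hd : (fun h : ↥(Subgroup.closure M) => c1 (g * h)) =
        fun h : ↥(Subgroup.closure M) => c2 (g * h) := by
      apply hinj
      funext h
      rw [hτH, hτH]
      have hgh := congrFun heq (g * h)
      rw [hτ, hτ] at hgh
      simpa only [mul_assoc, Subgroup.coe_mul] using hgh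
    simpa using congrFun hd 1
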